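/- The function E(α, β) = Λ(α) + Λ(β) + Λ(π − α − β) on D = {(α, β) : α > 0, β > 0, α + β < π} attains its unique maximum at α = β = π/3, with maximum value 3Λ(π/3). -/

import Mathlib

open Real MeasureTheory intervalIntegral Matrix

lemma sin_lower {x t : ℝ} (hx : x < π) (ht0 : 0 < t) (htx : t ≤ x) :
    t / x * Real.sin x ≤ Real.sin t := by
  have hx0 : 0 < x := lt_of_lt_of_le ht0 htx
  have hb0 : 0 ≤ t / x := by positivity
  have hb1 : t / x ≤ 1 := (div_le_one hx0).2 htx
  have h := strictConcaveOn_sin_Icc.concaveOn.2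
    ⟨le_refl 0, Real.pi_pos.le⟩ ⟨hx0.le, hx.le⟩
    (show (0:ℝ) ≤ 1 - t/x by linarith) hb0 (show (1 - t/x) + t/x = 1 by ring)
  simpa [Real.sin_zero, smul_eq_mul, div_mul_cancel₀, hx0.ne'] using h

lemma II_log_sin {x : ℝ} (hx0 : 0 < x) (hxpi : x < π) :
    IntervalIntegrable (fun t => Real.log |2 * Real.sin t|) volume 0 x := by
  set c : ℝ := 2 * Real.sin x / x with hc
  have hsinx : 0 < Real.sin x := Real.sin_pos_of_pos_of_lt_pi hx0 hxpi
  have hcpos : 0 < c := by positivity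
  set C : ℝ := Real.log 2 + |Real.log c| + 2 * |Real.log x| with hC
  have hC0 : 0 ≤ C := by positivity
  have hg : IntervalIntegrable (fun t : ℝ => C + 4 * t ^ (-(1/2) : ℝ)) volume 0 x :=
    intervalIntegrable_const.add ((intervalIntegrable_rpow' (by norm_num)).const_mul 4)
  apply hg.mono_fun
  · exact ((Real.measurable_log.comp ((Real.measurable_sin.const_mul 2).abs)).aestronglyMeasurable)
  · rw [Filter.EventuallyLE, ae_restrict_iff' measurableSet_uIoc]
    apply Filter.Eventually.of_forall
    intro t ht
    rw [Set.uIoc_of_le hx0.le] at ht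
    obtain ⟨ht0, htx⟩ := ht
    have hst : 0 < Real.sin t := Real.sin_pos_of_pos_of_lt_pi ht0 (lt_of_le_of_lt htx hxpi)
    have hlow : c * t ≤ 2 * Real.sin t := by
      have := sin_lower hxpi ht0 htx
      rw [hc]; rw [div_mul_eq_mul_div, div_le_iff₀ hx0] at *
      nlinarith [sin_lower hxpi ht0 htx]
    have hup : 2 * Real.sin t ≤ 2 * t := by
      have := Real.sin_le ht0.le; linarith
    -- |log(2 sin t)| ≤ |log (c t)| + |log (2 t)|
    have habs : |2 * Real.sin t| = 2 * Real.sin t := abs_of_pos (by linarith)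
    have hlog1 : Real.log (c * t) ≤ Real.log (2 * Real.sin t) :=
      Real.log_le_log (by positivity) hlow
    have hlog2 : Real.log (2 * Real.sin t) ≤ Real.log (2 * t) :=
      Real.log_le_log (by positivity) hup
    have hbound : |Real.log (2 * Real.sin t)| ≤ |Real.log (c * t)| + |Real.log (2 * t)| := by
      rw [abs_le]; constructor
      · calc -(|Real.log (c*t)| + |Real.log (2*t)|) ≤ -|Real.log (c*t)| := by
              have := abs_nonneg (Real.log (2*t)); linarith
          _ ≤ Real.log (c*t) := neg_abs_le _
          _ ≤ _ := hlog1
      · calc Real.log (2*Real.sin t) ≤ Real.log (2*t) := hlog2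
          _ ≤ |Real.log (2*t)| := le_abs_self _
          _ ≤ _ := by have := abs_nonneg (Real.log (c*t)); linarith
    have hlt : |Real.log t| ≤ 2 * t ^ (-(1/2) : ℝ) + |Real.log x| := by
      rcases le_or_gt t 1 with h1 | h1
      · have : -Real.log t ≤ 2 * t ^ (-(1/2) : ℝ) := by
          have h2 : Real.log (t ^ (-(1/2) : ℝ)) ≤ t ^ (-(1/2) : ℝ) :=
            (Real.log_le_sub_one_of_pos (by positivity)).trans (by linarith)
          rw [Real.log_rpow ht0] at h2
          linarith
        have habs : |Real.log t| = -Real.log t := by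
          rw [abs_of_nonpos (Real.log_nonpos ht0.le h1)]
        rw [habs]
        have := abs_nonneg (Real.log x); linarith
      · have hx1 : 1 < x := lt_of_lt_of_le h1 htx
        have h2 : Real.log t ≤ Real.log x := Real.log_le_log ht0 htx
        have h3 : |Real.log t| = Real.log t := abs_of_nonneg (Real.log_nonneg h1.le)
        have h4 : Real.log x ≤ |Real.log x| := le_abs_self _
        have : (0:ℝ) ≤ 2 * t ^ (-(1/2) : ℝ) := by positivity
        linarith
    have e1 : |Real.log (c * t)| ≤ |Real.log c| + |Real.log t| := by
      rw [Real.log_mul hcpos.ne' ht0.ne']; exact abs_add_le _ _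
    have e2 : |Real.log (2 * t)| ≤ Real.log 2 + |Real.log t| := by
      rw [Real.log_mul two_ne_zero ht0.ne']
      have := abs_add_le (Real.log 2) (Real.log t)
      rw [abs_of_nonneg (Real.log_nonneg one_le_two)] at this
      exact this
    have hrpow0 : (0:ℝ) ≤ t ^ (-(1/2) : ℝ) := by positivity
    simp only [Real.norm_eq_abs, habs]
    rw [abs_of_nonneg (by positivity : (0:ℝ) ≤ C + 4 * t ^ (-(1/2):ℝ))]
    calc |Real.log (2 * Real.sin t)| ≤ |Real.log (c*t)| + |Real.log (2*t)| := hbound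
      _ ≤ (|Real.log c| + |Real.log t|) + (Real.log 2 + |Real.log t|) := by linarith
      _ ≤ C + 4 * t ^ (-(1/2):ℝ) := by rw [hC]; linarith

/-- The Lobachevsky function. -/
noncomputable def lob (x : ℝ) : ℝ := -∫ t in (0:ℝ)..x, Real.log |2 * Real.sin t|

lemma lob_hasDerivAt {x : ℝ} (hx0 : 0 < x) (hxpi : x < π) :
    HasDerivAt lob (-Real.log (2 * Real.sin x)) x := by
  have hsx : 0 < Real.sin x := Real.sin_pos_of_pos_of_lt_pi hx0 hxpi
  have hne : |2 * Real.sin x| ≠ 0 := by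
    rw [abs_ne_zero]; positivity
  have hcont : ContinuousAt (fun t => Real.log |2 * Real.sin t|) x :=
    (((continuous_const.mul Real.continuous_sin).abs).continuousAt).log hne
  have hmeas : StronglyMeasurableAtFilter (fun t => Real.log |2 * Real.sin t|) (nhds x) volume :=
    (Real.measurable_log.comp
      ((Real.measurable_sin.const_mul 2).abs)).stronglyMeasurable.stronglyMeasurableAtFilter
  have h := (intervalIntegral.integral_hasDerivAt_right (II_log_sin hx0 hxpi) hmeas hcont).neg
  have habs : |2 * Real.sin x| = 2 * Real.sin x := abs_of_pos (by positivity)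
  rw [habs] at h
  exact h

lemma key1 {s a : ℝ} (hs1 : s < π) (ha0 : 0 < a) (ha : a < s / 2) :
    lob a + lob (s - a) < lob (s/2) + lob (s/2) := by
  have hs0 : 0 < s := by linarith
  set f : ℝ → ℝ := fun y => lob y + lob (s - y) with hf
  have hder : ∀ y ∈ Set.Ioo (0:ℝ) s, HasDerivAt f
      (-Real.log (2 * Real.sin y) + -Real.log (2 * Real.sin (s - y)) * (-1)) y := by
    intro y hy
    have h1 : HasDerivAt lob (-Real.log (2 * Real.sin y)) y :=
      lob_hasDerivAt hy.1 (by linarith [hy.2])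
    have h2 : HasDerivAt (fun y : ℝ => s - y) (-1 : ℝ) y := by
      simpa using (hasDerivAt_id y).const_sub s
    have h3 : HasDerivAt (fun y => lob (s - y)) (-Real.log (2 * Real.sin (s-y)) * (-1)) y :=
      (lob_hasDerivAt (by linarith [hy.2]) (by linarith [hy.1])).comp y h2
    exact h1.add h3
  have hsub : Set.Icc a (s/2) ⊆ Set.Ioo (0:ℝ) s := fun y hy =>
    ⟨lt_of_lt_of_le ha0 hy.1, lt_of_le_of_lt hy.2 (by linarith)⟩
  have hmono : StrictMonoOn f (Set.Icc a (s/2)) := by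
    apply strictMonoOn_of_deriv_pos (convex_Icc _ _)
    · intro y hy
      exact (hder y (hsub hy)).continuousAt.continuousWithinAt
    · intro y hy
      rw [interior_Icc] at hy
      have hy0 : 0 < y := lt_trans ha0 hy.1
      have hy2 : y < s / 2 := hy.2
      rw [(hder y ⟨hy0, by linarith⟩).deriv]
      have hsy : 0 < Real.sin y := Real.sin_pos_of_pos_of_lt_pi hy0 (by linarith)
      have hssy : 0 < Real.sin (s - y) := Real.sin_pos_of_pos_of_lt_pi (by linarith) (by linarith)
      have hlt : Real.sin y < Real.sin (s - y) := by
        have h := Real.sin_sub_sin (s - y) y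
        have hcos : 0 < Real.cos (s/2) :=
          Real.cos_pos_of_mem_Ioo ⟨by linarith [Real.pi_pos], by linarith⟩
        have hsin2 : 0 < Real.sin ((s - y - y)/2) :=
          Real.sin_pos_of_pos_of_lt_pi (by linarith) (by linarith [Real.pi_pos])
        have harg : (s - y + y) / 2 = s / 2 := by ring
        rw [harg] at h
        nlinarith
      have hlog := Real.log_lt_log (by positivity : (0:ℝ) < 2 * Real.sin y)
        (by linarith : 2 * Real.sin y < 2 * Real.sin (s - y))
      linarith
  have h := hmono (Set.mem_Icc.2 ⟨le_refl a, ha.le⟩) (Set.mem_Icc.2 ⟨ha.le, le_refl _⟩) ha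
  have harg : s - s/2 = s/2 := by ring
  simpa [hf, harg] using h

noncomputable def gfun (s : ℝ) : ℝ := lob (s/2) + lob (s/2) + lob (π - s)

lemma gfun_hasDerivAt {s : ℝ} (hs0 : 0 < s) (hs1 : s < π) :
    HasDerivAt gfun (-Real.log (2 * Real.sin (s/2)) + Real.log (2 * Real.sin (π - s))) s := by
  have hhalf : HasDerivAt (fun s : ℝ => s / 2) (1/2 : ℝ) s := by
    simpa using (hasDerivAt_id s).div_const 2
  have h1 : HasDerivAt (fun s => lob (s/2)) (-Real.log (2 * Real.sin (s/2)) * (1/2)) s :=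
    (lob_hasDerivAt (by linarith) (by linarith)).comp s hhalf
  have h2 : HasDerivAt (fun s : ℝ => π - s) (-1 : ℝ) s := by
    simpa using (hasDerivAt_id s).const_sub π
  have h3 : HasDerivAt (fun s => lob (π - s)) (-Real.log (2 * Real.sin (π - s)) * (-1)) s :=
    (lob_hasDerivAt (by linarith) (by linarith)).comp s h2
  have h := (h1.add h1).add h3
  refine h.congr_deriv ?_
  ring

lemma gfun_deriv_sign {s : ℝ} (hs0 : 0 < s) (hs1 : s < π) :
    deriv gfun s = -Real.log (2 * Real.sin (s/2)) + Real.log (2 * Real.sin (π - s)) :=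
  (gfun_hasDerivAt hs0 hs1).deriv

lemma key2 {s : ℝ} (hs0 : 0 < s) (hs1 : s < π) (hne : s ≠ 2 * π / 3) :
    gfun s < gfun (2 * π / 3) := by
  have hpi := Real.pi_pos
  have hsin_eq : ∀ u : ℝ, Real.sin (π - u) = 2 * Real.sin (u/2) * Real.cos (u/2) := by
    intro u
    rw [Real.sin_pi_sub]
    rw [show u = 2 * (u/2) by ring, Real.sin_two_mul]
    ring_nf
  rcases lt_or_gt_of_ne hne with h | h
  · -- increasing on [s, 2π/3]
    have hmono : StrictMonoOn gfun (Set.Icc s (2*π/3)) := by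
      apply strictMonoOn_of_deriv_pos (convex_Icc _ _)
      · intro y hy
        exact (gfun_hasDerivAt (lt_of_lt_of_le hs0 hy.1)
          (lt_of_le_of_lt hy.2 (by linarith))).continuousAt.continuousWithinAt
      · intro y hy
        rw [interior_Icc] at hy
        have hy0 : 0 < y := lt_trans hs0 hy.1
        have hy1 : y < π := by linarith [hy.2]
        rw [gfun_deriv_sign hy0 hy1]
        have hsy : 0 < Real.sin (y/2) := Real.sin_pos_of_pos_of_lt_pi (by linarith) (by linarith)
        have hcos : 1/2 < Real.cos (y/2) := by
          have := Real.cos_lt_cos_of_nonneg_of_le_pi (by linarith : (0:ℝ) ≤ y/2)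
            (by linarith : π/3 ≤ π) (by linarith [hy.2] : y/2 < π/3)
          rwa [Real.cos_pi_div_three] at this
        have hlog := Real.log_lt_log (by positivity : (0:ℝ) < 2 * Real.sin (y/2))
          (by rw [hsin_eq y]; nlinarith : 2 * Real.sin (y/2) < 2 * Real.sin (π - y))
        linarith
    exact hmono (Set.mem_Icc.2 ⟨le_refl _, h.le⟩) (Set.mem_Icc.2 ⟨h.le, le_refl _⟩) h
  · -- decreasing on [2π/3, s]
    have hanti : StrictAntiOn gfun (Set.Icc (2*π/3) s) := by
      apply strictAntiOn_of_deriv_neg (convex_Icc _ _)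
      · intro y hy
        exact (gfun_hasDerivAt (lt_of_lt_of_le (by linarith) hy.1)
          (lt_of_le_of_lt hy.2 hs1)).continuousAt.continuousWithinAt
      · intro y hy
        rw [interior_Icc] at hy
        have hy0 : 0 < y := by linarith [hy.1]
        have hy1 : y < π := lt_trans hy.2 hs1
        rw [gfun_deriv_sign hy0 hy1]
        have hsy : 0 < Real.sin (y/2) := Real.sin_pos_of_pos_of_lt_pi (by linarith) (by linarith)
        have hsy2 : 0 < Real.sin (π - y) := Real.sin_pos_of_pos_of_lt_pi (by linarith) (by linarith)
        have hcos : Real.cos (y/2) < 1/2 := by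
          have := Real.cos_lt_cos_of_nonneg_of_le_pi (by linarith : (0:ℝ) ≤ π/3)
            (by linarith : y/2 ≤ π) (by linarith [hy.1] : π/3 < y/2)
          rwa [Real.cos_pi_div_three] at this
        have hlog := Real.log_lt_log (by positivity : (0:ℝ) < 2 * Real.sin (π - y))
          (by rw [hsin_eq y]; nlinarith : 2 * Real.sin (π - y) < 2 * Real.sin (y/2))
        linarith
    exact hanti (Set.mem_Icc.2 ⟨le_refl _, h.le⟩) (Set.mem_Icc.2 ⟨h.le, le_refl _⟩) h

/-- The hyperbolic volume energy of a Euclidean triangle with angles a, b, π - a - b. -/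
noncomputable def Etri (a b : ℝ) : ℝ := lob a + lob b + lob (Real.pi - a - b)

lemma Etri_comm (a b : ℝ) : Etri a b = Etri b a := by
  unfold Etri
  rw [show π - a - b = π - b - a by ring]
  ring

lemma Etri_eq_gfun (a : ℝ) : Etri a a = gfun (2 * a) := by
  unfold Etri gfun
  rw [show 2*a/2 = a by ring, show π - 2*a = π - a - a by ring]

lemma Etri_lt_of_ne {a b : ℝ} (ha : 0 < a) (hb : 0 < b) (hab : a + b < π) (hne : a ≠ b) :
    Etri a b < gfun (a + b) := by
  wlog h : a < b generalizing a b
  · rw [Etri_comm, add_comm]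
    exact this hb ha (by linarith) hne.symm (lt_of_le_of_ne (not_lt.1 h) hne.symm)
  · have ha2 : a < (a+b)/2 := by linarith
    have h1 := key1 (s := a + b) hab ha ha2
    unfold Etri gfun
    rw [show a + b - a = b by ring] at h1
    rw [show π - (a+b) = π - a - b by ring] at *
    linarith

theorem Etri_max :
    ((Real.pi / 3, Real.pi / 3) ∈ {p : ℝ × ℝ | 0 < p.1 ∧ 0 < p.2 ∧ p.1 + p.2 < Real.pi}) ∧
    Etri (Real.pi / 3) (Real.pi / 3) = 3 * lob (Real.pi / 3) ∧
    ∀ p ∈ {p : ℝ × ℝ | 0 < p.1 ∧ 0 < p.2 ∧ p.1 + p.2 < Real.pi},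
      p ≠ (Real.pi / 3, Real.pi / 3) →
        Etri p.1 p.2 < Etri (Real.pi / 3) (Real.pi / 3) := by
  have hpi := Real.pi_pos
  refine ⟨⟨by positivity, by positivity, by linarith⟩, ?_, ?_⟩
  · unfold Etri
    rw [show π - π/3 - π/3 = π/3 by ring]
    ring
  · rintro ⟨a, b⟩ ⟨ha, hb, hab⟩ hne
    simp only at ha hb hab ⊢
    have htarget : Etri (π/3) (π/3) = gfun (2 * π / 3) := by
      rw [Etri_eq_gfun, show 2 * (π/3) = 2*π/3 by ring]
    rw [htarget]
    rcases eq_or_ne a b with rfl | hne'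
    · have hane : a ≠ π / 3 := by
        intro h; exact hne (by rw [h])
      rw [Etri_eq_gfun]
      exact key2 (by linarith) (by linarith) (by intro h; exact hane (by linarith))
    · have h1 := Etri_lt_of_ne ha hb hab hne'
      rcases eq_or_ne (a + b) (2 * π / 3) with h | h
      · rw [h] at h1; exact h1
      · exact lt_trans h1 (key2 (by linarith) hab h)
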